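/- arXiv:1405.1858 — 2 statements merged into one kernel-verified Lean document; each statement's English description precedes it below -/
import Mathlib

section
/- Let d ≥ 1, c₁ > 0, and let ψ : ℝ^d → ℝ^d and, for every ε > 0, ψ_ε : ℝ^d → ℝ^d be bijections such that ψ_ε, ψ_ε⁻¹, ψ and ψ⁻¹ are all Lipschitz with constant c₁, and suppose ψ_ε → ψ uniformly on every compact subset of ℝ^d as ε → 0. Let A ⊂ ℝ^d be a bounded set whose topological boundary has Lebesgue measure zero. Then λ(ψ_ε(A) △ ψ(A)) → 0 as ε → 0; equivalently, the indicator functions χ_{ψ_ε(A)} converge to χ_{ψ(A)} in L¹(ℝ^d). -/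
open MeasureTheory Metric Filter Topology
open scoped symmDiff

/-- A Lipschitz self-map of Euclidean space maps Lebesgue-null sets to null sets. -/
lemma lipschitz_image_null_aux {d : ℕ} {K : NNReal}
    {f : EuclideanSpace ℝ (Fin d) → EuclideanSpace ℝ (Fin d)}
    (hf : LipschitzWith K f) {s : Set (EuclideanSpace ℝ (Fin d))}
    (hs : volume s = 0) : volume (f '' s) = 0 := by
  set n : ℕ := Module.finrank ℝ (EuclideanSpace ℝ (Fin d)) with hn
  haveI : (μH[(n : ℝ)] : Measure (EuclideanSpace ℝ (Fin d))).IsAddHaarMeasure := by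
    rw [hn]; exact MeasureTheory.isAddHaarMeasure_hausdorffMeasure
  have hvol : (volume : Measure (EuclideanSpace ℝ (Fin d)))
      = Measure.addHaarScalarFactor (volume : Measure (EuclideanSpace ℝ (Fin d)))
          (μH[(n : ℝ)]) • (μH[(n : ℝ)]) :=
    Measure.isAddLeftInvariant_eq_smul _ _
  have hc : (0 : NNReal) < Measure.addHaarScalarFactor
      (volume : Measure (EuclideanSpace ℝ (Fin d))) (μH[(n : ℝ)]) :=
    Measure.addHaarScalarFactor_pos_of_isAddHaarMeasure _ _
  have hH : μH[(n : ℝ)] s = 0 := by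
    have := hs
    rw [hvol] at this
    rw [Measure.smul_apply, ENNReal.smul_def, smul_eq_mul, mul_eq_zero] at this
    exact this.resolve_left (ENNReal.coe_ne_zero.mpr hc.ne')
  have himg : μH[(n : ℝ)] (f '' s) = 0 := by
    have h := hf.hausdorffMeasure_image_le (n.cast_nonneg : (0:ℝ) ≤ n) s
    rw [hH, mul_zero] at h
    exact le_antisymm h (zero_le)
  rw [hvol]
  rw [Measure.smul_apply, himg, smul_zero]

/-- Segment-crossing: if `a ∈ A` and `y ∉ A`, there is a frontier point of `A`
at distance from `y` at most `dist y a`. -/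
lemma exists_frontier_dist_le {E : Type*} [NormedAddCommGroup E] [NormedSpace ℝ E]
    {A : Set E} {a y : E} (ha : a ∈ A) (hy : y ∉ A) :
    ∃ b ∈ frontier A, dist y b ≤ dist y a := by
  by_cases hseg : ∃ b ∈ segment ℝ y a, b ∈ frontier A
  · obtain ⟨b, hbseg, hbf⟩ := hseg
    refine ⟨b, hbf, ?_⟩
    have := dist_add_dist_of_mem_segment hbseg
    nlinarith [dist_nonneg (x := b) (y := a)]
  · exfalso
    push_neg at hseg
    have hmem : ∀ z, z ∉ frontier A → z ∈ interior A ∪ interior Aᶜ := by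
      intro z hz
      by_cases hzi : z ∈ interior A
      · exact Or.inl hzi
      · right
        rw [interior_compl, Set.mem_compl_iff]
        intro hcl
        exact hz ⟨hcl, hzi⟩
    have hsub : segment ℝ y a ⊆ interior A ∪ interior Aᶜ := fun z hz => hmem z (hseg z hz)
    have hconn : IsPreconnected (segment ℝ y a) := (convex_segment y a).isPreconnected
    have h1 : (segment ℝ y a ∩ interior A).Nonempty := by
      refine ⟨a, right_mem_segment ℝ y a, ?_⟩
      rcases hmem a (hseg a (right_mem_segment ℝ y a)) with h | h
      · exact h
      · exact absurd ha (by simpa using interior_subset h)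
    have h2 : (segment ℝ y a ∩ interior Aᶜ).Nonempty := by
      refine ⟨y, left_mem_segment ℝ y a, ?_⟩
      rcases hmem y (hseg y (left_mem_segment ℝ y a)) with h | h
      · exact absurd (interior_subset h) hy
      · exact h
    obtain ⟨z, _, hz1, hz2⟩ := hconn _ _ isOpen_interior isOpen_interior hsub h1 h2
    exact (interior_subset hz2) (interior_subset hz1)

/-- Lemma 2 of the paper: if uniformly bi-Lipschitz bijections `ψε` converge to `ψ`
uniformly on compact sets as `ε → 0⁺`, then for every bounded set `A` with
Lebesgue-null boundary, the Lebesgue measure of the symmetric difference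
`ψε(A) △ ψ(A)` tends to `0`. -/
theorem stmt_0 (d : ℕ) (hd : 1 ≤ d) (c₁ : ℝ) (hc₁ : 0 < c₁)
    (ψ ψinv : EuclideanSpace ℝ (Fin d) → EuclideanSpace ℝ (Fin d))
    (ψε ψεinv : ℝ → EuclideanSpace ℝ (Fin d) → EuclideanSpace ℝ (Fin d))
    (hψ_left : Function.LeftInverse ψinv ψ)
    (hψ_right : Function.RightInverse ψinv ψ)
    (hψε_left : ∀ ε > (0 : ℝ), Function.LeftInverse (ψεinv ε) (ψε ε))
    (hψε_right : ∀ ε > (0 : ℝ), Function.RightInverse (ψεinv ε) (ψε ε))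
    (hψ_lip : LipschitzWith (Real.toNNReal c₁) ψ)
    (hψinv_lip : LipschitzWith (Real.toNNReal c₁) ψinv)
    (hψε_lip : ∀ ε > (0 : ℝ), LipschitzWith (Real.toNNReal c₁) (ψε ε))
    (hψεinv_lip : ∀ ε > (0 : ℝ), LipschitzWith (Real.toNNReal c₁) (ψεinv ε))
    (hconv : ∀ K : Set (EuclideanSpace ℝ (Fin d)), IsCompact K →
      TendstoUniformlyOn (fun ε x => ψε ε x) ψ (𝓝[>] (0 : ℝ)) K)
    (A : Set (EuclideanSpace ℝ (Fin d)))
    (hA_bdd : Bornology.IsBounded A)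
    (hA_bd : volume (frontier A) = 0) :
    Tendsto (fun ε => volume ((ψε ε '' A) ∆ (ψ '' A))) (𝓝[>] (0 : ℝ)) (𝓝 0) := by
  have hc₁' : (Real.toNNReal c₁ : ℝ) = c₁ := Real.coe_toNNReal c₁ hc₁.le
  set N : Set (EuclideanSpace ℝ (Fin d)) := ψ '' frontier A with hN
  -- frontier A is compact
  have hclA : IsCompact (closure A) := hA_bdd.isCompact_closure
  have hfr_sub : frontier A ⊆ closure A := frontier_subset_closure
  have hfrc : IsCompact (frontier A) := hclA.of_isClosed_subset isClosed_frontier hfr_sub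
  have hNc : IsCompact N := hfrc.image hψ_lip.continuous
  have hN0 : volume N = 0 := lipschitz_image_null_aux hψ_lip hA_bd
  -- measure of cthickenings of N tends to 0
  have htend : Tendsto (fun r => volume (cthickening r N)) (𝓝 0) (𝓝 0) := by
    have := tendsto_measure_cthickening_of_isCompact (μ := volume) hNc
    rwa [hN0] at this
  rw [ENNReal.tendsto_nhds_zero]
  intro ε' hε'
  -- choose δ > 0 with volume (cthickening δ N) ≤ ε'
  have hev : ∀ᶠ r in 𝓝[>] (0:ℝ), volume (cthickening r N) ≤ ε' :=
    (ENNReal.tendsto_nhds_zero.mp htend ε' hε').filter_mono nhdsWithin_le_nhds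
  obtain ⟨δ, hδvol, hδpos⟩ := (hev.and self_mem_nhdsWithin).exists
  set η : ℝ := δ / (c₁ ^ 2 + 1) with hη
  have hc2 : (0:ℝ) < c₁ ^ 2 + 1 := by positivity
  have hηpos : 0 < η := div_pos hδpos hc2
  have hηδ : (c₁ ^ 2 + 1) * η = δ := by
    rw [hη]; field_simp
  -- uniform convergence on closure A
  have huc := (Metric.tendstoUniformlyOn_iff.mp (hconv (closure A) hclA)) η hηpos
  filter_upwards [huc, self_mem_nhdsWithin] with ε hdist hε
  rw [Set.mem_Ioi] at hε
  -- key inclusion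
  have hincl : (ψε ε '' A) ∆ (ψ '' A) ⊆ cthickening δ N := by
    intro x hx
    rw [Set.mem_symmDiff] at hx
    have key : ∃ b ∈ frontier A, dist x (ψ b) ≤ δ := by
      rcases hx with ⟨⟨a, haA, hax⟩, hxnot⟩ | ⟨⟨a, haA, hax⟩, hxnot⟩
      · -- x = ψε ε a, x ∉ ψ '' A
        set y := ψinv x with hy
        have hyA : y ∉ A := fun h => hxnot ⟨y, h, hψ_right x⟩
        have hya : dist y a ≤ c₁ * η := by
          have h1 : dist x (ψ a) < η := by
            have h := hdist a (subset_closure haA)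
            rw [hax] at h
            rw [dist_comm]
            exact h
          calc dist y a = dist (ψinv x) (ψinv (ψ a)) := by rw [hψ_left a]
            _ ≤ c₁ * dist x (ψ a) := by
                simpa [hc₁'] using hψinv_lip.dist_le_mul x (ψ a)
            _ ≤ c₁ * η := by nlinarith
        obtain ⟨b, hbf, hyb⟩ := exists_frontier_dist_le haA hyA
        refine ⟨b, hbf, ?_⟩
        have : dist x (ψ b) = dist (ψ y) (ψ b) := by rw [hψ_right x]
        rw [this]
        calc dist (ψ y) (ψ b) ≤ c₁ * dist y b := by
              simpa [hc₁'] using hψ_lip.dist_le_mul y b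
          _ ≤ c₁ * (c₁ * η) := by nlinarith
          _ ≤ δ := by nlinarith
      · -- x = ψ a, x ∉ ψε ε '' A
        set y := ψεinv ε x with hy
        have hyA : y ∉ A := fun h => hxnot ⟨y, h, hψε_right ε hε x⟩
        have hya : dist y a ≤ c₁ * η := by
          have h1 : dist x (ψε ε a) < η := by
            have h := hdist a (subset_closure haA)
            rw [hax] at h
            exact h
          calc dist y a = dist (ψεinv ε x) (ψεinv ε (ψε ε a)) := by
                rw [hψε_left ε hε a]
            _ ≤ c₁ * dist x (ψε ε a) := by
                simpa [hc₁'] using (hψεinv_lip ε hε).dist_le_mul x (ψε ε a)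
            _ ≤ c₁ * η := by nlinarith
        obtain ⟨b, hbf, hyb⟩ := exists_frontier_dist_le haA hyA
        refine ⟨b, hbf, ?_⟩
        have hx1 : dist x (ψε ε b) ≤ c₁ * (c₁ * η) := by
          have : dist x (ψε ε b) = dist (ψε ε y) (ψε ε b) := by rw [hψε_right ε hε x]
          rw [this]
          calc dist (ψε ε y) (ψε ε b) ≤ c₁ * dist y b := by
                simpa [hc₁'] using (hψε_lip ε hε).dist_le_mul y b
            _ ≤ c₁ * (c₁ * η) := by nlinarith
        have hx2 : dist (ψε ε b) (ψ b) ≤ η := by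
          have := hdist b (hfr_sub hbf)
          rw [dist_comm] at this
          exact this.le
        calc dist x (ψ b) ≤ dist x (ψε ε b) + dist (ψε ε b) (ψ b) := dist_triangle _ _ _
          _ ≤ c₁ * (c₁ * η) + η := by nlinarith
          _ ≤ δ := by nlinarith
    obtain ⟨b, hbf, hdb⟩ := key
    exact mem_cthickening_of_dist_le x (ψ b) δ N ⟨b, hbf, rfl⟩ hdb
  exact le_trans (measure_mono hincl) hδvol
end

section
/- Let L > 0 and let (f_n) be a sequence of functions f_n : ℝ^d → ℝ, each Lipschitz with constant L, such that f_n(0) → 0 and such that the (almost everywhere defined) gradients ∇f_n converge to 0 in the weak-* sense in L^∞: for every h ∈ L¹(ℝ^d) and every vector v ∈ ℝ^d, ∫_{ℝ^d} h(x) · (Df_n(x)[v]) dx → 0 as n → ∞, where Df_n(x) denotes the Fréchet derivative of f_n at x (which exists for a.e. x by Rademacher's theorem). Then f_n → 0 uniformly on every compact subset of ℝ^d. -/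
open MeasureTheory Metric Filter Topology

section Aux

variable {d : ℕ}
local notation "E" => EuclideanSpace ℝ (Fin d)

private lemma stmt5_lip_intOn {C : NNReal} {g : E → ℝ} (hg : LipschitzWith C g) (c : E) (r : ℝ) :
    IntegrableOn (fun y => g (y + c)) (ball (0:E) r) volume := by
  apply Measure.integrableOn_of_bounded (M := C * r + ‖g c‖) measure_ball_lt_top.ne
    ((hg.continuous.comp (continuous_id.add continuous_const)).aestronglyMeasurable)
  filter_upwards [ae_restrict_mem measurableSet_ball] with y hy
  have h1 : ‖g (y + c) - g c‖ ≤ C * ‖y‖ := by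
    simpa [dist_eq_norm] using hg.dist_le_mul (y + c) c
  have h2 : ‖y‖ ≤ r := by
    have := mem_ball_iff_norm.1 hy
    simpa using this.le
  have h3 : (C:ℝ) * ‖y‖ ≤ C * r := mul_le_mul_of_nonneg_left h2 C.coe_nonneg
  calc ‖g (y + c)‖ ≤ ‖g (y + c) - g c‖ + ‖g c‖ := by
        simpa using norm_add_le (g (y + c) - g c) (g c)
  _ ≤ C * r + ‖g c‖ := by linarith

private lemma stmt5_ae_diff_translate {C : NNReal} {g : E → ℝ} (hg : LipschitzWith C g) (c : E) :
    ∀ᵐ y : E, DifferentiableAt ℝ g (y + c) := by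
  have h := hg.ae_differentiableAt (μ := (volume : Measure E))
  rw [ae_iff] at h ⊢
  have heq : {y : E | ¬ DifferentiableAt ℝ g (y + c)}
      = (· + c) ⁻¹' {z | ¬ DifferentiableAt ℝ g z} := rfl
  rw [heq, measure_preimage_add_right]
  exact h

private lemma stmt5_trans_id (G : E → ℝ) (c : E) (r : ℝ) :
    ∫ y in ball (0 : E) r, G (y + c) = ∫ z in ball c r, G z := by
  have h := (measurePreserving_add_right (volume : Measure E) c).setIntegral_preimage_emb
    (measurableEmbedding_addRight c) G (ball c r)
  rw [← h]
  congr 1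
  ext y
  simp [mem_ball, dist_eq_norm]

private lemma stmt5_key_hasDerivAt {C : NNReal} {g : E → ℝ} (hg : LipschitzWith C g)
    (x : E) (r : ℝ) (t : ℝ) :
    HasDerivAt (fun s : ℝ => ∫ y in ball (0:E) r, g (y + s • x))
      (∫ y in ball (0:E) r, fderiv ℝ g (y + t • x) x) t := by
  set G : ℝ → ℝ := fun s => ∫ y in ball (0:E) r, g (y + s • x) with hG
  rw [hasDerivAt_iff_tendsto_slope]
  set F : ℝ → E → ℝ := fun s y => (s - t)⁻¹ * (g (y + s • x) - g (y + t • x)) with hF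
  have hslope : ∀ s : ℝ, slope G t s = ∫ y in ball (0:E) r, F s y := by
    intro s
    rw [slope_def_field]
    rw [div_eq_inv_mul]
    rw [← integral_sub (stmt5_lip_intOn hg (s • x) r) (stmt5_lip_intOn hg (t • x) r)]
    rw [← integral_const_mul]
  have key : Tendsto (fun s => ∫ y in ball (0:E) r, F s y) (𝓝[≠] t)
      (𝓝 (∫ y in ball (0:E) r, fderiv ℝ g (y + t • x) x)) := by
    apply tendsto_integral_filter_of_dominated_convergence (fun _ => (C : ℝ) * ‖x‖)
    · exact Eventually.of_forall fun s =>
        (((continuous_const.mul ((hg.continuous.comp (continuous_id.add continuous_const)).sub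
          (hg.continuous.comp (continuous_id.add continuous_const))))).aestronglyMeasurable)
    · filter_upwards [self_mem_nhdsWithin] with s hs
      have hst : s - t ≠ 0 := sub_ne_zero.2 hs
      apply Eventually.of_forall
      intro y
      have h1 : ‖g (y + s • x) - g (y + t • x)‖ ≤ C * ‖(s - t) • x‖ := by
        have := hg.dist_le_mul (y + s • x) (y + t • x)
        rw [dist_eq_norm, dist_eq_norm] at this
        rwa [show y + s • x - (y + t • x) = (s - t) • x by rw [sub_smul]; abel] at this
      rw [hF]
      simp only [norm_mul, norm_inv, Real.norm_eq_abs]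
      rw [norm_smul] at h1
      calc |s - t|⁻¹ * ‖g (y + s • x) - g (y + t • x)‖
          ≤ |s - t|⁻¹ * (C * (‖s - t‖ * ‖x‖)) := by
            apply mul_le_mul_of_nonneg_left h1 (by positivity)
      _ = C * ‖x‖ := by
            rw [Real.norm_eq_abs]
            field_simp [abs_ne_zero.2 hst]
    · exact integrableOn_const measure_ball_lt_top.ne
    · have := stmt5_ae_diff_translate hg (t • x)
      filter_upwards [ae_restrict_of_ae this] with y hy
      have hline : HasDerivAt (fun s : ℝ => g (y + s • x)) (fderiv ℝ g (y + t • x) x) t := by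
        have h1 : HasDerivAt (fun s : ℝ => y + s • x) x t := by
          simpa using ((hasDerivAt_id t).smul_const x).const_add y
        exact (hy.hasFDerivAt.comp_hasDerivAt t h1)
      have := hasDerivAt_iff_tendsto_slope.1 hline
      apply this.congr
      intro s
      rw [slope_def_field, div_eq_inv_mul]
  exact key.congr fun s => (hslope s).symm

private lemma stmt5_H_bound {C : NNReal} {g : E → ℝ} (hg : LipschitzWith C g)
    (x : E) (r : ℝ) (t : ℝ) :
    ‖∫ y in ball (0:E) r, fderiv ℝ g (y + t • x) x‖
      ≤ ((C:ℝ) * ‖x‖) * (volume (ball (0:E) r)).toReal := by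
  have hm : AEStronglyMeasurable (fun y : E => fderiv ℝ g (y + t • x) x)
      (volume.restrict (ball (0:E) r)) :=
    (((measurable_fderiv_apply_const ℝ (f := g) x).comp
      (measurable_id.add_const (t • x)))).aestronglyMeasurable
  apply norm_setIntegral_le_of_norm_le_const measure_ball_lt_top ?_
  intro y _
  calc ‖fderiv ℝ g (y + t • x) x‖ ≤ ‖fderiv ℝ g (y + t • x)‖ * ‖x‖ :=
        (fderiv ℝ g (y + t • x)).le_opNorm x
  _ ≤ (C:ℝ) * ‖x‖ := by
      gcongr
      exact norm_fderiv_le_of_lipschitz ℝ hg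

private lemma stmt5_avg_diff_tendsto {C : NNReal}
    (f : ℕ → E → ℝ) (hf_lip : ∀ n, LipschitzWith C (f n))
    (hgrad : ∀ h : E → ℝ, Integrable h → ∀ v : E,
        Tendsto (fun n => ∫ x, h x * (fderiv ℝ (f n) x v)) atTop (𝓝 0))
    (x : E) (r : ℝ) :
    Tendsto (fun n => (∫ y in ball (0:E) r, f n (y + x)) - ∫ y in ball (0:E) r, f n y)
      atTop (𝓝 0) := by
  set H : ℕ → ℝ → ℝ := fun n t => ∫ y in ball (0:E) r, fderiv ℝ (f n) (y + t • x) x with hH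
  set M : ℝ := ((C:ℝ) * ‖x‖) * (volume (ball (0:E) r)).toReal with hM
  have hHmeas : ∀ n, Measurable (H n) := by
    intro n
    have : H n = deriv (fun s : ℝ => ∫ y in ball (0:E) r, f n (y + s • x)) :=
      funext fun t => ((stmt5_key_hasDerivAt (hf_lip n) x r t).deriv).symm
    rw [this]
    exact measurable_deriv _
  have hHb : ∀ n t, ‖H n t‖ ≤ M := fun n t => stmt5_H_bound (hf_lip n) x r t
  have key : ∀ n, (∫ y in ball (0:E) r, f n (y + x)) - (∫ y in ball (0:E) r, f n y)
      = ∫ t in (0:ℝ)..1, H n t := by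
    intro n
    have hInt : IntervalIntegrable (H n) volume 0 1 := by
      rw [intervalIntegrable_iff]
      apply Measure.integrableOn_of_bounded (M := M)
      · exact (measure_mono Set.uIoc_subset_uIcc |>.trans_lt measure_Icc_lt_top).ne
      · exact (hHmeas n).aestronglyMeasurable
      · exact ae_of_all _ fun t => hHb n t
    have := intervalIntegral.integral_eq_sub_of_hasDerivAt
      (fun t _ => stmt5_key_hasDerivAt (hf_lip n) x r t) hInt
    rw [this]
    norm_num
  have hconv : Tendsto (fun n => ∫ t in (0:ℝ)..1, H n t) atTop (𝓝 0) := by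
    have hDCT : Tendsto (fun n => ∫ t in Set.Ioc (0:ℝ) 1, H n t) atTop
        (𝓝 (∫ _ in Set.Ioc (0:ℝ) 1, (0:ℝ))) := by
      apply tendsto_integral_filter_of_dominated_convergence (fun _ => M)
      · exact Eventually.of_forall fun n => (hHmeas n).aestronglyMeasurable
      · exact Eventually.of_forall fun n => ae_of_all _ fun t => hHb n t
      · exact integrableOn_const measure_Ioc_lt_top.ne
      · apply ae_of_all
        intro t
        have heq : ∀ n, H n t
            = ∫ z, (ball (t • x) r).indicator (fun _ => (1:ℝ)) z * fderiv ℝ (f n) z x := by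
          intro n
          rw [hH]
          simp only
          rw [stmt5_trans_id (fun z => fderiv ℝ (f n) z x) (t • x) r]
          rw [← integral_indicator measurableSet_ball]
          congr 1
          ext z
          by_cases hz : z ∈ ball (t • x) r <;> simp [Set.indicator_apply, hz]
        have hint : Integrable ((ball (t • x) r).indicator (fun _ => (1:ℝ))) := by
          rw [integrable_indicator_iff measurableSet_ball]
          exact integrableOn_const measure_ball_lt_top.ne
        have := hgrad ((ball (t • x) r).indicator (fun _ => (1:ℝ))) hint x
        exact Tendsto.congr (fun n => (heq n).symm) this
    simp only [integral_zero] at hDCT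
    simpa [intervalIntegral.integral_of_le (zero_le_one (α := ℝ))] using hDCT
  exact Tendsto.congr (fun n => (key n).symm) hconv

private lemma stmt5_pointwise (L : ℝ) (hL : 0 < L)
    (f : ℕ → E → ℝ) (hf_lip : ∀ n, LipschitzWith (Real.toNNReal L) (f n))
    (hf0 : Tendsto (fun n => f n 0) atTop (𝓝 0))
    (hgrad : ∀ h : E → ℝ, Integrable h → ∀ v : E,
        Tendsto (fun n => ∫ x, h x * (fderiv ℝ (f n) x v)) atTop (𝓝 0))
    (x : E) : Tendsto (fun n => f n x) atTop (𝓝 0) := by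
  have hLc : ((Real.toNNReal L : NNReal) : ℝ) = L := Real.coe_toNNReal L hL.le
  rw [NormedAddCommGroup.tendsto_nhds_zero]
  intro ε hε
  set r : ℝ := ε / (4 * L) with hr
  have hrpos : 0 < r := by positivity
  set B0 := ball (0:E) r with hB0
  set μB : ℝ := (volume B0).toReal with hμB
  have hμpos : 0 < μB :=
    ENNReal.toReal_pos (measure_ball_pos _ _ hrpos).ne' measure_ball_lt_top.ne
  have hLr : L * r = ε / 4 := by
    rw [hr]; field_simp
  have h1 := NormedAddCommGroup.tendsto_nhds_zero.1
    (stmt5_avg_diff_tendsto f hf_lip hgrad x r) ((ε/4) * μB) (by positivity)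
  have h2 := NormedAddCommGroup.tendsto_nhds_zero.1 hf0 (ε/4) (by positivity)
  filter_upwards [h1, h2] with n hn1 hn2
  -- set integrals
  have hconst : ∀ c : ℝ, ∫ _ in B0, c ∂volume = c * μB := by
    intro c
    rw [setIntegral_const]
    ring_nf
    rfl
  have key : ∀ c : E, ‖f n c * μB - ∫ y in B0, f n (y + c)‖ ≤ (ε/4) * μB := by
    intro c
    have hint1 : IntegrableOn (fun y : E => f n c) B0 volume :=
      integrableOn_const measure_ball_lt_top.ne
    have hint2 : IntegrableOn (fun y : E => f n (y + c)) B0 volume :=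
      stmt5_lip_intOn (hf_lip n) c r
    have : f n c * μB - ∫ y in B0, f n (y + c) = ∫ y in B0, (f n c - f n (y + c)) := by
      rw [integral_sub hint1 hint2, hconst]
    rw [this]
    have hb : ∀ y ∈ B0, ‖f n c - f n (y + c)‖ ≤ ε / 4 := by
      intro y hy
      have hlip := (hf_lip n).dist_le_mul c (y + c)
      rw [dist_eq_norm, dist_eq_norm, hLc] at hlip
      have h3 : ‖c - (y + c)‖ = ‖y‖ := by
        rw [show c - (y + c) = -y by abel]
        simp
      rw [h3] at hlip
      have h4 : ‖y‖ ≤ r := by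
        have := mem_ball_iff_norm.1 hy
        simpa using this.le
      calc ‖f n c - f n (y + c)‖ ≤ L * ‖y‖ := hlip
        _ ≤ L * r := mul_le_mul_of_nonneg_left h4 hL.le
        _ = ε / 4 := hLr
    have := norm_setIntegral_le_of_norm_le_const (μ := (volume : Measure E)) (C := ε/4) measure_ball_lt_top hb
    exact this
  have e1 := key x
  have e2 : ‖(∫ y in B0, f n y) - f n 0 * μB‖ ≤ (ε/4) * μB := by
    have := key 0
    have heq : (∫ y in B0, f n (y + (0:E))) = ∫ y in B0, f n y := by simp
    rw [heq] at this
    calc ‖(∫ y in B0, f n y) - f n 0 * μB‖ = ‖f n 0 * μB - ∫ y in B0, f n y‖ := by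
          rw [norm_sub_rev]
      _ ≤ (ε/4) * μB := this
  -- combine
  have tri : ‖f n x * μB‖ ≤ ‖f n x * μB - ∫ y in B0, f n (y + x)‖
      + ‖(∫ y in B0, f n (y + x)) - ∫ y in B0, f n y‖
      + ‖(∫ y in B0, f n y) - f n 0 * μB‖ + ‖f n 0 * μB‖ := by
    have t1 := norm_add_le (f n x * μB - ∫ y in B0, f n (y + x))
      ((∫ y in B0, f n (y + x)) - ∫ y in B0, f n y)
    have t2 := norm_add_le ((∫ y in B0, f n y) - f n 0 * μB) (f n 0 * μB)
    have t3 := norm_add_le (f n x * μB - ∫ y in B0, f n y)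
      ((∫ y in B0, f n y))
    have t4 := norm_add_le (f n x * μB - ∫ y in B0, f n (y + x))
      ((∫ y in B0, f n (y + x)) - ∫ y in B0, f n y)
    have e : f n x * μB = (f n x * μB - ∫ y in B0, f n (y + x))
      + ((∫ y in B0, f n (y + x)) - ∫ y in B0, f n y)
      + (((∫ y in B0, f n y) - f n 0 * μB) + f n 0 * μB) := by ring
    calc ‖f n x * μB‖
        = ‖(f n x * μB - ∫ y in B0, f n (y + x))
            + ((∫ y in B0, f n (y + x)) - ∫ y in B0, f n y)
            + (((∫ y in B0, f n y) - f n 0 * μB) + f n 0 * μB)‖ := by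
          rw [← e]
      _ ≤ ‖(f n x * μB - ∫ y in B0, f n (y + x))
            + ((∫ y in B0, f n (y + x)) - ∫ y in B0, f n y)‖
          + ‖((∫ y in B0, f n y) - f n 0 * μB) + f n 0 * μB‖ := norm_add_le _ _
      _ ≤ (‖f n x * μB - ∫ y in B0, f n (y + x)‖
            + ‖(∫ y in B0, f n (y + x)) - ∫ y in B0, f n y‖)
          + (‖(∫ y in B0, f n y) - f n 0 * μB‖ + ‖f n 0 * μB‖) := by
          exact add_le_add t1 t2
      _ = _ := by ring
  have hfn0 : ‖f n 0 * μB‖ < (ε/4) * μB := by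
    rw [norm_mul, Real.norm_eq_abs μB, abs_of_pos hμpos]
    exact mul_lt_mul_of_pos_right hn2 hμpos
  have hmul : ‖f n x * μB‖ = ‖f n x‖ * μB := by
    rw [norm_mul, Real.norm_eq_abs μB, abs_of_pos hμpos]
  have hlt : ‖f n x‖ * μB < ε * μB := by
    nlinarith [e1, e2, hfn0, tri, hn1, hmul]
  exact lt_of_mul_lt_mul_right hlt hμpos.le

end Aux

/-- If `fₙ : ℝ^d → ℝ` are uniformly Lipschitz, `fₙ(0) → 0`, and the a.e.-defined gradients
tend to `0` weak-* in `L^∞` (tested against every `L¹` function and every direction), then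
`fₙ → 0` uniformly on every compact subset of `ℝ^d`. -/
theorem stmt_5 (d : ℕ) (L : ℝ) (hL : 0 < L)
    (f : ℕ → EuclideanSpace ℝ (Fin d) → ℝ)
    (hf_lip : ∀ n, LipschitzWith (Real.toNNReal L) (f n))
    (hf0 : Tendsto (fun n => f n 0) atTop (𝓝 0))
    (hgrad : ∀ h : EuclideanSpace ℝ (Fin d) → ℝ, Integrable h →
      ∀ v : EuclideanSpace ℝ (Fin d),
        Tendsto (fun n => ∫ x, h x * (fderiv ℝ (f n) x v)) atTop (𝓝 0)) :
    ∀ K : Set (EuclideanSpace ℝ (Fin d)), IsCompact K →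
      TendstoUniformlyOn (fun n x => f n x) 0 atTop K := by
  intro K hK
  have hLc : ((Real.toNNReal L : NNReal) : ℝ) = L := Real.coe_toNNReal L hL.le
  have hpt : ∀ x, Tendsto (fun n => f n x) atTop (𝓝 0) :=
    fun x => stmt5_pointwise L hL f hf_lip hf0 hgrad x
  rw [Metric.tendstoUniformlyOn_iff]
  intro ε hε
  obtain ⟨t, htf, htc⟩ := (totallyBounded_iff.1 hK.totallyBounded) (ε/(2*L)) (by positivity)
  have hev : ∀ᶠ n in atTop, ∀ y ∈ t, ‖f n y‖ < ε/2 := by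
    rw [eventually_all_finite htf]
    intro y _
    exact NormedAddCommGroup.tendsto_nhds_zero.1 (hpt y) (ε/2) (by positivity)
  filter_upwards [hev] with n hn x hx
  obtain ⟨y, hyt, hxy⟩ := Set.mem_iUnion₂.1 (htc hx)
  have hlip := (hf_lip n).dist_le_mul x y
  rw [dist_eq_norm, dist_eq_norm, hLc] at hlip
  have hd : ‖x - y‖ < ε/(2*L) := by
    have := mem_ball_iff_norm.1 hxy
    simpa [dist_eq_norm] using hxy
  have h1 : ‖f n x - f n y‖ < ε/2 := by
    calc ‖f n x - f n y‖ ≤ L * ‖x - y‖ := hlip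
      _ < L * (ε/(2*L)) := by
          exact mul_lt_mul_of_pos_left hd hL
      _ = ε/2 := by field_simp
  have h2 : ‖f n y‖ < ε/2 := hn y hyt
  have : ‖f n x‖ < ε := by
    calc ‖f n x‖ ≤ ‖f n x - f n y‖ + ‖f n y‖ := by
          simpa using norm_add_le (f n x - f n y) (f n y)
      _ < ε/2 + ε/2 := by linarith
      _ = ε := by ring
  simpa [dist_eq_norm] using this
end
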